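/- arXiv:1110.2716 — 4 statements merged into one kernel-verified Lean document; each statement's English description precedes it below -/
import Mathlib

section
/- Let S be a t-signed set and S₀ an equivalence class of S under connectedness that satisfies the consistent-parity condition (all paths between two given elements have the same parity of length). Then for connected a, b ∈ S₀ and any K ⊆ [t], the path lengths pl_S(a,b) and pl_S(s(K,a,b), s(K,b,a)) have the same parity. -/
open MvPolynomial Finset

/-- The index set `N = [r 1] × ⋯ × [r n]`, realized as dependent functions. -/
abbrev Idx {n : ℕ} (r : Fin n → ℕ) := ∀ i, Fin (r i)

variable {n : ℕ} {r : Fin n → ℕ}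

/-- The switch `s(K,a,b)`: `b i` in the components of `K`, `a i` elsewhere. -/
def sw (K : Finset (Fin n)) (a b : Idx r) : Idx r := fun i => if i ∈ K then b i else a i

/-- The distance `d(a,b) = #{i : a i ≠ b i}`. -/
def hdist (a b : Idx r) : ℕ := (univ.filter fun i => a i ≠ b i).card

/-- The truncated distance `d_t(a,b) = #{i ∈ [t] : a i ≠ b i}`. -/
def hdistT (t : ℕ) (a b : Idx r) : ℕ :=
  (univ.filter fun i : Fin n => (i : ℕ) < t ∧ a i ≠ b i).card

/-- `c : ℕ → N` is a path of length `m` from `a` to `b` inside `S`: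
consecutive elements differ in exactly one component. -/
def IsPath (S : Set (Idx r)) (a b : Idx r) (m : ℕ) (c : ℕ → Idx r) : Prop :=
  c 0 = a ∧ c m = b ∧ (∀ j ≤ m, c j ∈ S) ∧ ∀ j < m, hdist (c j) (c (j + 1)) = 1

/-- `a` and `b` are connected in `S`. -/
def Connected (S : Set (Idx r)) (a b : Idx r) : Prop := ∃ m c, IsPath S a b m c

/-- The minimal path length `pl_S(a,b)`. -/
noncomputable def pl (S : Set (Idx r)) (a b : Idx r) : ℕ :=
  sInf {m | ∃ c, IsPath S a b m c}

/-- `S` is `t`-switchable. -/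
def Switchable (t : ℕ) (S : Set (Idx r)) : Prop :=
  ∀ a ∈ S, ∀ b ∈ S, hdist a b = 2 → ∀ i : Fin n, (i : ℕ) < t →
    sw {i} a b ∈ S ∧ sw {i} b a ∈ S

/-- `S` is `t`-signed: `t`-switchable, and each connectedness class satisfies one of:
constant first `t` coordinates, pairwise distance at most 1, or path-independent
parity of path lengths. -/
def Signed (t : ℕ) (S : Set (Idx r)) : Prop :=
  Switchable t S ∧
  ∀ a ∈ S,
    (∀ b c, Connected S a b → Connected S a c → ∀ i : Fin n, (i : ℕ) < t → b i = c i) ∨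
    (∀ b c, Connected S a b → Connected S a c → hdist b c ≤ 1) ∨
    (∀ b c, Connected S a b → Connected S a c →
      ∀ m m' p p', IsPath S b c m p → IsPath S b c m' p' → m % 2 = m' % 2)

variable (k : Type*) [Field k]

/-- The generalized determinant `f_{i,a,b}`. -/
noncomputable def fdet (i : Fin n) (a b : Idx r) : MvPolynomial (Idx r) k :=
  X a * X b - X (sw {i} a b) * X (sw {i} b a)

/-- The generalized permanent `g_{i,a,b}`. -/
noncomputable def gperm (i : Fin n) (a b : Idx r) : MvPolynomial (Idx r) k :=
  X a * X b + X (sw {i} a b) * X (sw {i} b a)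

/-- The binomial `h_{S,K,a,b}`. -/
noncomputable def hbin (S : Set (Idx r)) (K : Finset (Fin n)) (a b : Idx r) :
    MvPolynomial (Idx r) k :=
  X a * X b - (-1) ^ (K.card * (pl S a b - 1)) * (X (sw K a b) * X (sw K b a))

/-- The slice permanental ideal `J^⟨t⟩`. -/
noncomputable def Jt (t : ℕ) : Ideal (MvPolynomial (Idx r) k) :=
  Ideal.span {p | ∃ (a b : Idx r) (i : Fin n),
    hdist a b = 2 ∧ (i : ℕ) < t ∧ a i ≠ b i ∧ p = gperm k i a b}

/-- The ideal `J̃^⟨t⟩_S`. -/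
noncomputable def Jtilde (t : ℕ) (S : Set (Idx r)) : Ideal (MvPolynomial (Idx r) k) :=
  Ideal.span {p | ∃ (a b : Idx r) (i : Fin n),
    Connected S a b ∧ (i : ℕ) < t ∧ a i ≠ b i ∧ p = hbin k S {i} a b}

/-- The ideal `Var^⟨t⟩_S = (x_a : a ∉ S)`. -/
noncomputable def VarIdeal (S : Set (Idx r)) : Ideal (MvPolynomial (Idx r) k) :=
  Ideal.span {p | ∃ a ∉ S, p = X a}

/-- The ideal `Q^⟨t⟩_S = Var^⟨t⟩_S + J̃^⟨t⟩_S`. -/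
noncomputable def Qideal (t : ℕ) (S : Set (Idx r)) : Ideal (MvPolynomial (Idx r) k) :=
  VarIdeal k S + Jtilde k t S

/-- The ideal `Ĵ^⟨t⟩`. -/
noncomputable def Jhat (t : ℕ) : Ideal (MvPolynomial (Idx r) k) :=
  Ideal.span {p | ∃ (a b : Idx r) (i : Fin n),
    hdist a b = 3 ∧ hdistT t a b = 3 ∧ (i : ℕ) < t ∧ a i ≠ b i ∧ p = gperm k i a b}

/-- `S` is a maximal `t`-signed set. -/
noncomputable def MaximalSigned (t : ℕ) (S : Set (Idx r)) : Prop :=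
  Signed t S ∧ ∀ T : Set (Idx r), Signed t T → S ⊆ T → Qideal k t S ≤ Qideal k t T


section Aux

variable {S : Set (Idx r)} {t : ℕ} {a b : Idx r} {m : ℕ} {c : ℕ → Idx r}

lemma hdist_comm (a b : Idx r) : hdist a b = hdist b a := by
  unfold hdist; congr 1; ext i; simp [ne_comm]

lemma exists_of_hdist_one (h : hdist a b = 1) :
    ∃ k, a k ≠ b k ∧ ∀ l, l ≠ k → a l = b l := by
  rw [hdist, Finset.card_eq_one] at h
  obtain ⟨k0, hk⟩ := h
  have hmem : ∀ l : Fin n, (a l ≠ b l) ↔ l = k0 := by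
    intro l
    constructor
    · intro hl
      have : l ∈ Finset.univ.filter fun i => a i ≠ b i := by simp [hl]
      rw [hk] at this; simpa using this
    · rintro rfl
      have : l ∈ Finset.univ.filter fun i => a i ≠ b i := by rw [hk]; simp
      simpa using this
  exact ⟨k0, (hmem k0).2 rfl, fun l hl => by
    by_contra hne; exact hl ((hmem l).1 hne)⟩

lemma hdist_one_of (k : Fin n) (h1 : a k ≠ b k)
    (h2 : ∀ l, l ≠ k → a l = b l) : hdist a b = 1 := by
  rw [hdist]
  have : (Finset.univ.filter fun i => a i ≠ b i) = {k} := by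
    ext l
    simp only [Finset.mem_filter, Finset.mem_univ, true_and, Finset.mem_singleton]
    constructor
    · intro hl; by_contra h'; exact hl (h2 l h')
    · rintro rfl; exact h1
  rw [this, Finset.card_singleton]

lemma hdist_two_of (k i : Fin n) (hki : k ≠ i) (h1 : a k ≠ b k)
    (h2 : a i ≠ b i) (h3 : ∀ l, l ≠ k → l ≠ i → a l = b l) : hdist a b = 2 := by
  rw [hdist]
  have : (Finset.univ.filter fun j => a j ≠ b j) = {k, i} := by
    ext l
    simp only [Finset.mem_filter, Finset.mem_univ, true_and, Finset.mem_insert,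
      Finset.mem_singleton]
    constructor
    · intro hl
      by_contra h'
      push_neg at h'
      exact hl (h3 l h'.1 h'.2)
    · rintro (rfl | rfl) <;> assumption
  rw [this, Finset.card_insert_of_notMem (by simpa using hki), Finset.card_singleton]

lemma sw_singleton (i : Fin n) (a b : Idx r) :
    sw {i} a b = Function.update a i (b i) := by
  funext j
  by_cases h : j = i
  · subst h; simp [sw]
  · simp [sw, h, Function.update_of_ne h]

lemma IsPath.mem_left (h : IsPath S a b m c) : a ∈ S := h.1 ▸ h.2.2.1 0 (Nat.zero_le m)

lemma IsPath.mem_right (h : IsPath S a b m c) : b ∈ S := h.2.1 ▸ h.2.2.1 m le_rfl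

lemma isPath_refl (ha : a ∈ S) : IsPath S a a 0 (fun _ => a) :=
  ⟨rfl, rfl, fun _ _ => ha, fun j hj => absurd hj (Nat.not_lt_zero j)⟩

lemma isPath_single (ha : a ∈ S) (hb : b ∈ S) (h : hdist a b = 1) :
    IsPath S a b 1 (fun j => if j = 0 then a else b) := by
  refine ⟨by simp, by simp, ?_, ?_⟩
  · intro j _
    by_cases h0 : j = 0 <;> simp [h0, ha, hb]
  · intro j hj
    have : j = 0 := by omega
    subst this
    simpa using h

lemma IsPath.concat {d : Idx r} {m' : ℕ} {c' : ℕ → Idx r}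
    (h1 : IsPath S a b m c) (h2 : IsPath S b d m' c') :
    IsPath S a d (m + m') (fun j => if j ≤ m then c j else c' (j - m)) := by
  obtain ⟨h10, h1m, h1mem, h1step⟩ := h1
  obtain ⟨h20, h2m, h2mem, h2step⟩ := h2
  refine ⟨by simp [h10], ?_, ?_, ?_⟩
  · by_cases h : m + m' ≤ m
    · have hm' : m' = 0 := by omega
      simp only [if_pos h]
      have e : m + m' = m := by omega
      rw [e, h1m]
      rw [hm'] at h2m
      rw [← h2m, h20]
    · simp only [if_neg h]
      rw [show m + m' - m = m' by omega, h2m]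
  · intro j hj
    simp only []
    by_cases h : j ≤ m
    · simp only [if_pos h]; exact h1mem j h
    · simp only [if_neg h]; exact h2mem (j - m) (by omega)
  · intro j hj
    simp only []
    by_cases hj1 : j + 1 ≤ m
    · rw [if_pos (by omega : j ≤ m), if_pos hj1]; exact h1step j (by omega)
    · by_cases hj0 : j ≤ m
      · have hjm : j = m := by omega
        subst hjm
        rw [if_pos le_rfl, if_neg hj1, show j + 1 - j = 1 by omega, h1m, ← h20]
        exact h2step 0 (by omega)
      · rw [if_neg hj0, if_neg (by omega), show j + 1 - m = (j - m) + 1 by omega]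
        exact h2step (j - m) (by omega)

lemma IsPath.reverse (h : IsPath S a b m c) : IsPath S b a m (fun j => c (m - j)) := by
  obtain ⟨h0, hm, hmem, hstep⟩ := h
  refine ⟨by simp [hm], by simp [h0], fun j _ => hmem _ (by omega), ?_⟩
  intro j hj
  have e1 : m - j = (m - (j + 1)) + 1 := by omega
  simp only []
  rw [hdist_comm, e1]
  exact hstep (m - (j + 1)) (by omega)

lemma IsPath.tail (h : IsPath S a b (m + 1) c) : IsPath S (c 1) b m (fun j => c (j + 1)) := by
  obtain ⟨h0, hm, hmem, hstep⟩ := h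
  exact ⟨rfl, hm, fun j hj => hmem (j + 1) (by omega), fun j hj => hstep (j + 1) (by omega)⟩

lemma Connected.symm (h : Connected S a b) : Connected S b a := by
  obtain ⟨m, c, hc⟩ := h
  exact ⟨m, _, hc.reverse⟩

lemma Connected.trans {d : Idx r} (h1 : Connected S a b) (h2 : Connected S b d) :
    Connected S a d := by
  obtain ⟨m, c, hc⟩ := h1
  obtain ⟨m', c', hc'⟩ := h2
  exact ⟨m + m', _, hc.concat hc'⟩

lemma connected_self (ha : a ∈ S) : Connected S a a := ⟨0, _, isPath_refl ha⟩

lemma pl_path {x y : Idx r} (h : Connected S x y) : ∃ c, IsPath S x y (pl S x y) c := by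
  have hne : {m | ∃ c, IsPath S x y m c}.Nonempty := by
    obtain ⟨m, c, hc⟩ := h
    exact ⟨m, c, hc⟩
  exact Nat.sInf_mem hne

lemma transport (hSw : Switchable t S) :
    ∀ (m : ℕ) (a b : Idx r) (c : ℕ → Idx r), IsPath S a b m c →
      ∀ i : Fin n, (i : ℕ) < t → ∀ v : Fin (r i),
      Function.update a i v ∈ S → Function.update b i v ∈ S := by
  intro m
  induction m with
  | zero =>
    intro a b c hc i hi v hv
    have hab : a = b := by rw [← hc.1, hc.2.1]
    exact hab ▸ hv
  | succ m ih =>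
    intro a b c hc i hi v hv
    have hstep0 : hdist a (c 1) = 1 := by
      have := hc.2.2.2 0 (by omega)
      rwa [hc.1] at this
    obtain ⟨k, hk1, hk2⟩ := exists_of_hdist_one hstep0
    apply ih (c 1) b _ hc.tail i hi v
    by_cases hki : k = i
    · subst hki
      have : Function.update (c 1) k v = Function.update a k v := by
        funext l
        by_cases hl : l = k
        · subst hl; simp
        · rw [Function.update_of_ne hl, Function.update_of_ne hl]
          exact (hk2 l hl).symm
      rw [this]; exact hv
    · have hik : i ≠ k := fun h => hki h.symm
      have hc1i : a i = c 1 i := hk2 i hik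
      by_cases hva : v = a i
      · have : Function.update (c 1) i v = c 1 := by
          funext l
          by_cases hl : l = i
          · subst hl; rw [Function.update_self, hva, hc1i]
          · rw [Function.update_of_ne hl]
        rw [this]; exact hc.2.2.1 1 (by omega)
      · have hc1 : c 1 ∈ S := hc.2.2.1 1 (by omega)
        have hd2 : hdist (c 1) (Function.update a i v) = 2 := by
          apply hdist_two_of k i hki
          · rw [Function.update_of_ne hki]
            exact Ne.symm hk1
          · rw [Function.update_self, ← hc1i]
            exact fun h => hva h.symm
          · intro l hlk hli
            rw [Function.update_of_ne hli]
            exact (hk2 l hlk).symm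
        have hs := (hSw (c 1) hc1 _ hv hd2 i hi).1
        have hswe : sw {i} (c 1) (Function.update a i v) = Function.update (c 1) i v := by
          rw [sw_singleton, Function.update_self]
        rwa [hswe] at hs

lemma main_step (hSw : Switchable t S) :
    ∀ (m : ℕ) (a b : Idx r) (c : ℕ → Idx r), IsPath S a b m c →
      ∀ i : Fin n, (i : ℕ) < t →
      ∃ (p q : ℕ) (pa pb : ℕ → Idx r),
        IsPath S a (Function.update a i (b i)) p pa ∧
        IsPath S b (Function.update b i (a i)) q pb ∧ p % 2 = q % 2 := by
  intro m
  induction m with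
  | zero =>
    intro a b c hc i hi
    have hab : a = b := by rw [← hc.1, hc.2.1]
    subst hab
    exact ⟨0, 0, fun _ => a, fun _ => a, by rw [Function.update_eq_self]; exact isPath_refl hc.mem_left,
      by rw [Function.update_eq_self]; exact isPath_refl hc.mem_left, rfl⟩
  | succ m ih =>
    intro a b c hc i hi
    by_cases hab : a i = b i
    · refine ⟨0, 0, fun _ => a, fun _ => b, ?_, ?_, rfl⟩
      · rw [← hab, Function.update_eq_self]; exact isPath_refl hc.mem_left
      · rw [hab, Function.update_eq_self]; exact isPath_refl hc.mem_right
    · have hstep0 : hdist a (c 1) = 1 := by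
        have := hc.2.2.2 0 (by omega)
        rwa [hc.1] at this
      obtain ⟨k, hk1, hk2⟩ := exists_of_hdist_one hstep0
      have htail := hc.tail
      have hc1S : c 1 ∈ S := hc.2.2.1 1 (by omega)
      by_cases hki : k = i
      · subst hki
        by_cases h1b : c 1 k = b k
        · -- first step lands on the switch of a
          have ha' : Function.update a k (b k) = c 1 := by
            funext l
            by_cases hl : l = k
            · subst hl; rw [Function.update_self, h1b]
            · rw [Function.update_of_ne hl]; exact hk2 l hl
          have hb' : Function.update b k (a k) ∈ S := by
            apply transport hSw m (c 1) b _ htail k hi (a k)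
            have e : Function.update (c 1) k (a k) = a := by
              funext l
              by_cases hl : l = k
              · subst hl; rw [Function.update_self]
              · rw [Function.update_of_ne hl]; exact (hk2 l hl).symm
            rw [e]; exact hc.mem_left
          have hdb : hdist b (Function.update b k (a k)) = 1 := by
            apply hdist_one_of k
            · rw [Function.update_self]; exact fun h => hab h.symm
            · intro l hl; rw [Function.update_of_ne hl]
          have hda : hdist a (Function.update a k (b k)) = 1 := by
            rw [ha']; exact hstep0
          have haS' : Function.update a k (b k) ∈ S := by rw [ha']; exact hc1S
          exact ⟨1, 1, _, _, isPath_single hc.mem_left haS' hda,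
            isPath_single hc.mem_right hb' hdb, rfl⟩
        · obtain ⟨p, q, pa1, pb1, hpa1, hpb1, hpq⟩ := ih (c 1) b _ htail k hi
          have hup : Function.update (c 1) k (b k) = Function.update a k (b k) := by
            funext l
            by_cases hl : l = k
            · subst hl; rw [Function.update_self, Function.update_self]
            · rw [Function.update_of_ne hl, Function.update_of_ne hl]
              exact (hk2 l hl).symm
          rw [hup] at hpa1
          have pa' := (isPath_single hc.mem_left hc1S hstep0).concat hpa1
          have hb' : Function.update b k (a k) ∈ S := by
            apply transport hSw m (c 1) b _ htail k hi (a k)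
            have e : Function.update (c 1) k (a k) = a := by
              funext l
              by_cases hl : l = k
              · subst hl; rw [Function.update_self]
              · rw [Function.update_of_ne hl]; exact (hk2 l hl).symm
            rw [e]; exact hc.mem_left
          have hd1 : hdist (Function.update b k (c 1 k)) (Function.update b k (a k)) = 1 := by
            apply hdist_one_of k
            · rw [Function.update_self, Function.update_self]
              exact fun h => hk1 h.symm
            · intro l hl
              rw [Function.update_of_ne hl, Function.update_of_ne hl]
          have pb' := hpb1.concat (isPath_single hpb1.mem_right hb' hd1)
          exact ⟨1 + p, q + 1, _, _, pa', pb', by omega⟩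
      · -- step at a coordinate k ≠ i
        have hik : i ≠ k := fun h => hki h.symm
        have h1i : a i = c 1 i := hk2 i hik
        obtain ⟨p, q, pa1, pb1, hpa1, hpb1, hpq⟩ := ih (c 1) b _ htail i hi
        have hbeq : Function.update b i (c 1 i) = Function.update b i (a i) := by
          rw [← h1i]
        rw [hbeq] at hpb1
        have ha1' : Function.update (c 1) i (b i) ∈ S := hpa1.mem_right
        have hd2 : hdist a (Function.update (c 1) i (b i)) = 2 := by
          apply hdist_two_of k i hki
          · rw [Function.update_of_ne hki]; exact hk1
          · rw [Function.update_self]; exact hab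
          · intro l hlk hli
            rw [Function.update_of_ne hli]
            exact hk2 l hlk
        have hs := (hSw a hc.mem_left _ ha1' hd2 i hi).1
        have hswe : sw {i} a (Function.update (c 1) i (b i)) = Function.update a i (b i) := by
          rw [sw_singleton, Function.update_self]
        rw [hswe] at hs
        have hd1 : hdist (Function.update (c 1) i (b i)) (Function.update a i (b i)) = 1 := by
          apply hdist_one_of k
          · rw [Function.update_of_ne hki, Function.update_of_ne hki]
            exact Ne.symm hk1
          · intro l hl
            by_cases hli : l = i
            · subst hli; rw [Function.update_self, Function.update_self]
            · rw [Function.update_of_ne hli, Function.update_of_ne hli]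
              exact (hk2 l hl).symm
        have pa' := ((isPath_single hc.mem_left hc1S hstep0).concat hpa1).concat
          (isPath_single ha1' hs hd1)
        exact ⟨1 + p + 1, q, _, _, pa', hpb1, by omega⟩

end Aux

/-- in a class with path-independent parity, `pl_S(a,b)` and
`pl_S(s(K,a,b), s(K,b,a))` have the same parity. -/
theorem stmt6 (t : ℕ) (S : Set (Idx r)) (hS : Signed t S) (a b : Idx r)
    (hab : Connected S a b)
    (hpar : ∀ c d, Connected S a c → Connected S a d →
      ∀ m m' p p', IsPath S c d m p → IsPath S c d m' p' → m % 2 = m' % 2)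
    (K : Finset (Fin n)) (hK : ∀ i ∈ K, (i : ℕ) < t) :
    pl S a b % 2 = pl S (sw K a b) (sw K b a) % 2 := by
  obtain ⟨hSw, _⟩ := hS
  have haS : a ∈ S := by
    obtain ⟨m, c, hc⟩ := hab
    exact hc.mem_left
  have par : ∀ x y x' y' : Idx r, Connected S a x → Connected S a y →
      Connected S a x' → Connected S a y' →
      ∀ p q px py, IsPath S x x' p px → IsPath S y y' q py → p % 2 = q % 2 →
      pl S x y % 2 = pl S x' y' % 2 := by
    intro x y x' y' hx hy hx' hy' p q px py hpx hpy hpq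
    obtain ⟨c0, hc0⟩ := pl_path (hx.symm.trans hy)
    have hbig := (hpx.reverse.concat hc0).concat hpy
    obtain ⟨c1, hc1⟩ := pl_path (⟨_, _, hbig⟩ : Connected S x' y')
    have := hpar x' y' hx' hy' _ _ _ _ hbig hc1
    omega
  suffices h : ∀ K : Finset (Fin n), (∀ i ∈ K, (i : ℕ) < t) →
      Connected S a (sw K a b) ∧ Connected S a (sw K b a) ∧
      pl S a b % 2 = pl S (sw K a b) (sw K b a) % 2 by
    exact (h K hK).2.2
  intro K
  induction K using Finset.induction_on with
  | empty =>
    intro _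
    have e1 : sw ∅ a b = a := by funext j; simp [sw]
    have e2 : sw ∅ b a = b := by funext j; simp [sw]
    rw [e1, e2]
    exact ⟨connected_self haS, hab, rfl⟩
  | @insert i K hiK ihK =>
    intro hKt
    have hit : (i : ℕ) < t := hKt i (Finset.mem_insert_self i K)
    obtain ⟨hA, hB, hplK⟩ := ihK fun j hj => hKt j (Finset.mem_insert_of_mem hj)
    obtain ⟨m, c, hc⟩ := hA.symm.trans hB
    obtain ⟨p, q, pa, pb, hpa, hpb, hpq⟩ := main_step hSw m (sw K a b) (sw K b a) c hc i hit
    have eA : Function.update (sw K a b) i (sw K b a i) = sw (insert i K) a b := by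
      funext l
      by_cases hl : l = i
      · subst hl
        rw [Function.update_self]
        simp [sw, hiK]
      · rw [Function.update_of_ne hl]
        simp [sw, hl]
    have eB : Function.update (sw K b a) i (sw K a b i) = sw (insert i K) b a := by
      funext l
      by_cases hl : l = i
      · subst hl
        rw [Function.update_self]
        simp [sw, hiK]
      · rw [Function.update_of_ne hl]
        simp [sw, hl]
    rw [eA] at hpa
    rw [eB] at hpb
    have hA' : Connected S a (sw (insert i K) a b) := hA.trans ⟨p, pa, hpa⟩
    have hB' : Connected S a (sw (insert i K) b a) := hB.trans ⟨q, pb, hpb⟩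
    have hpl' := par (sw K a b) (sw K b a) _ _ hA hB hA' hB' p q pa pb hpa hpb hpq
    exact ⟨hA', hB', hplK.trans hpl'⟩
end

section
/- Let S be a t-signed set and S₀ an equivalence class of S with respect to connectedness. Then either for all i ∈ [t] the set {a_i : a ∈ S₀} contains at most two elements, or else for all a, b ∈ S₀ one has d(a,b) ≤ 1. -/
open MvPolynomial Finset

variable {n : ℕ} {r : Fin n → ℕ}

variable (k : Type*) [Field k]

lemma sw_single_apply (i : Fin n) (x y : Idx r) (j : Fin n) :
    sw {i} x y j = if j = i then y j else x j := by
  simp [sw, Finset.mem_singleton]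

lemma hdist_one_of_s7 (i : Fin n) {x y : Idx r} (hne : x i ≠ y i)
    (h : ∀ j, j ≠ i → x j = y j) : hdist x y = 1 := by
  have : (univ.filter fun j => x j ≠ y j) = {i} := by
    ext j
    simp only [Finset.mem_filter, Finset.mem_univ, true_and, Finset.mem_singleton]
    constructor
    · intro hj; by_contra hji; exact hj (h j hji)
    · rintro rfl; exact hne
  simp [hdist, this]

lemma hdist_two_of_s7 (i j : Fin n) {x y : Idx r} (hij : i ≠ j)
    (hi : x i ≠ y i) (hj : x j ≠ y j)
    (h : ∀ l, l ≠ i → l ≠ j → x l = y l) : hdist x y = 2 := by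
  have : (univ.filter fun l => x l ≠ y l) = {i, j} := by
    ext l
    simp only [Finset.mem_filter, Finset.mem_univ, true_and, Finset.mem_insert,
      Finset.mem_singleton]
    constructor
    · intro hl; by_contra hc; push_neg at hc; exact hl (h l hc.1 hc.2)
    · rintro (rfl | rfl) <;> assumption
  rw [hdist, this, Finset.card_insert_of_notMem (by simpa using hij),
    Finset.card_singleton]

lemma exists_of_hdist_one_s7 {x y : Idx r} (h : hdist x y = 1) :
    ∃ j, x j ≠ y j ∧ ∀ l, l ≠ j → x l = y l := by
  rw [hdist, Finset.card_eq_one] at h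
  obtain ⟨j, hj⟩ := h
  have hm : ∀ l : Fin n, x l ≠ y l ↔ l = j := by
    intro l
    have := Finset.ext_iff.mp hj l
    simpa using this
  exact ⟨j, (hm j).mpr rfl, fun l hl => by
    by_contra hc; exact hl ((hm l).mp hc)⟩

/-- Key lemma: in a `t`-switchable set, if `x` and `y` are joined by a path,
then switching the `i`-th coordinate of `x` to that of `y` stays in `S` (for `i < t`). -/
lemma sw_mem_of_path {t : ℕ} {S : Set (Idx r)} (hsw : Switchable t S)
    {i : Fin n} (hi : (i : ℕ) < t) :
    ∀ m (c : ℕ → Idx r) (x y : Idx r), IsPath S x y m c → sw {i} x y ∈ S := by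
  intro m
  induction m with
  | zero =>
    rintro c x y ⟨h0, hm, hmem, -⟩
    have hxy : x = y := by rw [← h0, hm]
    have hs : sw {i} x y = x := by
      funext j
      by_cases h : j = i <;> simp only [sw_single_apply, if_pos, if_neg, h, if_true, if_false]
      exact (congrFun hxy j).symm
    rw [hs]; exact h0 ▸ hmem 0 le_rfl
  | succ m ih =>
    rintro c x y ⟨h0, hm, hmem, hstep⟩
    set w := c 1 with hw
    have hpath' : IsPath S w y m (fun j => c (j + 1)) :=
      ⟨rfl, hm, fun j hj => hmem (j + 1) (by omega), fun j hj => hstep (j + 1) (by omega)⟩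
    have hd1 : hdist x w = 1 := by
      have := hstep 0 (by omega); rwa [h0] at this
    obtain ⟨j0, hj0ne, hj0eq⟩ := exists_of_hdist_one_s7 hd1
    have hxS : x ∈ S := by have := hmem 0 (by omega); rwa [h0] at this
    by_cases hxi : x i = w i
    · have hj0i : j0 ≠ i := by rintro rfl; exact hj0ne hxi
      by_cases hxy : x i = y i
      · have hs : sw {i} x y = x := by
          funext j
          by_cases h : j = i
          · subst h; rw [sw_single_apply]; simpa using hxy.symm
          · rw [sw_single_apply]; simp [h]
        rw [hs]; exact hxS
      · have hz' : sw {i} w y ∈ S := ih _ w y hpath'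
        have hz'i : sw {i} w y i = y i := by rw [sw_single_apply]; simp
        have hz'j0 : sw {i} w y j0 = w j0 := by rw [sw_single_apply]; simp [hj0i]
        have hz'other : ∀ l, l ≠ i → sw {i} w y l = w l := by
          intro l hl; rw [sw_single_apply]; simp [hl]
        have hd2 : hdist x (sw {i} w y) = 2 := by
          apply hdist_two_of_s7 i j0 (Ne.symm hj0i)
          · rw [hz'i]; exact hxy
          · rw [hz'j0]; exact hj0ne
          · intro l hli hlj0
            rw [hz'other l hli]; exact hj0eq l hlj0
        have := (hsw x hxS _ hz' hd2 i hi).1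
        have heq : sw {i} x (sw {i} w y) = sw {i} x y := by
          funext j
          simp only [sw_single_apply]
          by_cases h : j = i <;> simp [h]
        rwa [heq] at this
    · have hj0 : j0 = i := by
        by_contra hc; exact hxi (hj0eq i (fun h => hc h.symm))
      have hagree : ∀ j, j ≠ i → x j = w j := fun j hj =>
        hj0eq j (by rw [hj0]; exact hj)
      have hs : sw {i} x y = sw {i} w y := by
        funext j
        simp only [sw_single_apply]
        by_cases h : j = i
        · simp [h]
        · simp [h, hagree j h]
      rw [hs]; exact ih _ w y hpath'

lemma connected_refl {S : Set (Idx r)} {a : Idx r} (ha : a ∈ S) : Connected S a a :=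
  ⟨0, fun _ => a, rfl, rfl, fun _ _ => ha, fun j h => absurd h (Nat.not_lt_zero j)⟩

/-- each class of a `t`-signed set either has all `[t]`-coordinate
projections of size at most two, or has pairwise distance at most one. -/
theorem stmt7 (t : ℕ) (S : Set (Idx r)) (hS : Signed t S) (a₀ : Idx r) (ha₀ : a₀ ∈ S) :
    (∀ i : Fin n, (i : ℕ) < t →
      Set.ncard {v : Fin (r i) | ∃ b, Connected S a₀ b ∧ b i = v} ≤ 2) ∨
    (∀ b c, Connected S a₀ b → Connected S a₀ c → hdist b c ≤ 1) := by
  obtain ⟨hsw, hcls⟩ := hS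
  have conn0 : Connected S a₀ a₀ := connected_refl ha₀
  rcases hcls a₀ ha₀ with h1 | h2 | h3
  · -- constant first t coordinates: projection is a singleton
    left
    intro i hi
    have hsub : {v : Fin (r i) | ∃ b, Connected S a₀ b ∧ b i = v} ⊆ {a₀ i} := by
      rintro v ⟨b, hb, rfl⟩
      exact h1 b a₀ hb conn0 i hi
    calc Set.ncard {v : Fin (r i) | ∃ b, Connected S a₀ b ∧ b i = v}
        ≤ Set.ncard {a₀ i} := Set.ncard_le_ncard hsub (Set.finite_singleton _)
      _ = 1 := Set.ncard_singleton _
      _ ≤ 2 := by omega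
  · right; exact h2
  · -- parity case: each projection has at most 2 elements
    left
    intro i hi
    set T := {v : Fin (r i) | ∃ b, Connected S a₀ b ∧ b i = v} with hT
    -- key: no three distinct values
    have key : ∀ v w : Fin (r i), v ∈ T → w ∈ T → v ≠ a₀ i → w ≠ a₀ i → v ≠ w → False := by
      rintro v w ⟨b, hb, rfl⟩ ⟨e, he, rfl⟩ hv hw hvw
      obtain ⟨mb, cb, hpb⟩ := hb
      obtain ⟨me, ce, hpe⟩ := he
      set q1 := sw {i} a₀ b with hq1
      set q2 := sw {i} a₀ e with hq2
      have hq1S : q1 ∈ S := sw_mem_of_path hsw hi mb cb a₀ b hpb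
      have hq2S : q2 ∈ S := sw_mem_of_path hsw hi me ce a₀ e hpe
      have hq1i : q1 i = b i := by rw [hq1, sw_single_apply]; simp
      have hq2i : q2 i = e i := by rw [hq2, sw_single_apply]; simp
      have hq1o : ∀ l, l ≠ i → q1 l = a₀ l := by
        intro l hl; rw [hq1, sw_single_apply]; simp [hl]
      have hq2o : ∀ l, l ≠ i → q2 l = a₀ l := by
        intro l hl; rw [hq2, sw_single_apply]; simp [hl]
      -- the 3-cycle a₀ → q1 → q2 → a₀
      have hd01 : hdist a₀ q1 = 1 :=
        hdist_one_of_s7 i (by rw [hq1i]; exact fun h => hv h.symm)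
          (fun j hj => (hq1o j hj).symm)
      have hd12 : hdist q1 q2 = 1 :=
        hdist_one_of_s7 i (by rw [hq1i, hq2i]; exact hvw)
          (fun j hj => by rw [hq1o j hj, hq2o j hj])
      have hd20 : hdist q2 a₀ = 1 :=
        hdist_one_of_s7 i (by rw [hq2i]; exact hw) (fun j hj => hq2o j hj)
      set p3 : ℕ → Idx r := fun j => if j = 1 then q1 else if j = 2 then q2 else a₀ with hp3
      have hpath3 : IsPath S a₀ a₀ 3 p3 := by
        refine ⟨rfl, rfl, ?_, ?_⟩
        · intro j hj
          interval_cases j <;> simp [hp3, ha₀, hq1S, hq2S]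
        · intro j hj
          interval_cases j <;> simpa [hp3] using (by assumption : _)
      have hpath0 : IsPath S a₀ a₀ 0 (fun _ => a₀) :=
        ⟨rfl, rfl, fun _ _ => ha₀, fun j h => absurd h (Nat.not_lt_zero j)⟩
      have := h3 a₀ a₀ conn0 conn0 3 0 p3 (fun _ => a₀) hpath3 hpath0
      simp at this
    -- conclude ncard ≤ 2
    by_cases hall : ∀ v ∈ T, v = a₀ i
    · have hsub : T ⊆ {a₀ i} := fun v hv => hall v hv
      calc Set.ncard T ≤ Set.ncard {a₀ i} :=
            Set.ncard_le_ncard hsub (Set.finite_singleton _)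
        _ = 1 := Set.ncard_singleton _
        _ ≤ 2 := by omega
    · push_neg at hall
      obtain ⟨v, hvT, hv⟩ := hall
      have hsub : T ⊆ {a₀ i, v} := by
        intro w hwT
        by_contra hc
        simp only [Set.mem_insert_iff, Set.mem_singleton_iff, not_or] at hc
        exact key v w hvT hwT hv hc.1 (fun h => hc.2 h.symm)
      calc Set.ncard T ≤ Set.ncard {a₀ i, v} :=
            Set.ncard_le_ncard hsub (Set.Finite.insert _ (Set.finite_singleton _))
        _ ≤ Set.ncard {v} + 1 := Set.ncard_insert_le _ _
        _ ≤ 2 := by rw [Set.ncard_singleton]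
end

section
/- Let S be a t-switchable subset of N (not necessarily t-signed). Then the permanental ideal J^{⟨t⟩} is contained in Q^{⟨t⟩}_S = Var^{⟨t⟩}_S + J̃^{⟨t⟩}_S. -/
open MvPolynomial Finset

variable {n : ℕ} {r : Fin n → ℕ}

variable (k : Type*) [Field k]

lemma sw_apply (i : Fin n) (a b : Idx r) (l : Fin n) :
    sw {i} a b l = if l = i then b l else a l := by
  simp [sw]

lemma hdist_self (a : Idx r) : hdist a a = 0 := by
  simp [hdist]

lemma hdist_a_sw (i : Fin n) (a b : Idx r) (hi : a i ≠ b i) :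
    hdist a (sw {i} a b) = 1 := by
  unfold hdist
  have : (univ.filter fun l => a l ≠ sw {i} a b l) = {i} := by
    ext l
    by_cases h : l = i <;> simp [sw_apply, h, hi]
  rw [this, card_singleton]

lemma hdist_sw_b (i : Fin n) (a b : Idx r) (hd : hdist a b = 2) (hi : a i ≠ b i) :
    hdist (sw {i} a b) b = 1 := by
  unfold hdist
  have : (univ.filter fun l => sw {i} a b l ≠ b l)
      = (univ.filter fun l => a l ≠ b l).erase i := by
    ext l
    by_cases h : l = i <;> simp [sw_apply, h]
  rw [this, card_erase_of_mem (by simp [hi])]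
  unfold hdist at hd
  omega

lemma hdist_sw_sw (i : Fin n) (a b : Idx r) :
    hdist (sw {i} a b) (sw {i} b a) = hdist a b := by
  unfold hdist
  congr 1
  ext l
  by_cases h : l = i <;> simp [sw_apply, h, ne_comm]

lemma sw_sw_left (i : Fin n) (a b : Idx r) :
    sw {i} (sw {i} a b) (sw {i} b a) = a := by
  funext l
  by_cases h : l = i <;> simp [sw_apply, h]

lemma pl_eq_two (S : Set (Idx r)) (a b : Idx r) (i : Fin n)
    (hd : hdist a b = 2) (hi : a i ≠ b i)
    (ha : a ∈ S) (ha' : sw {i} a b ∈ S) (hb : b ∈ S) : pl S a b = 2 := by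
  set c : ℕ → Idx r := fun j => if j = 0 then a else if j = 1 then sw {i} a b else b with hc
  have hpath : IsPath S a b 2 c := by
    refine ⟨by simp [hc], by simp [hc], ?_, ?_⟩
    · intro j hj
      interval_cases j <;> simpa [hc]
    · intro j hj
      interval_cases j
      · simpa [hc] using hdist_a_sw i a b hi
      · simpa [hc] using hdist_sw_b i a b hd hi
  have hmem : (2 : ℕ) ∈ {m | ∃ c, IsPath S a b m c} := ⟨c, hpath⟩
  refine le_antisymm (Nat.sInf_le hmem) (le_csInf ⟨2, hmem⟩ ?_)
  rintro m ⟨p, hp0, hpm, -, hstep⟩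
  by_contra hlt
  push_neg at hlt
  interval_cases m
  · rw [← hp0, hpm, hdist_self] at hd; exact two_ne_zero hd.symm
  · have := hstep 0 (by norm_num)
    rw [hp0, hpm] at this
    omega

/-- `J^⟨t⟩ ⊆ Q^⟨t⟩_S` for any `t`-switchable `S`. -/
theorem stmt10 (h2 : (2 : k) ≠ 0) (t : ℕ) (S : Set (Idx r)) (hS : Switchable t S) :
    Jt k t ≤ Qideal k t S := by
  rw [Jt, Ideal.span_le]
  rintro p ⟨a, b, i, hd, hit, hi, rfl⟩
  set a' := sw {i} a b with ha'
  set b' := sw {i} b a with hb'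
  by_cases hab : a ∈ S ∧ b ∈ S
  · obtain ⟨haS, hbS⟩ := hab
    obtain ⟨ha'S, hb'S⟩ := hS a haS b hbS hd i hit
    have hconn : Connected S a b := by
      refine ⟨2, fun j => if j = 0 then a else if j = 1 then a' else b,
        by simp, by simp, ?_, ?_⟩
      · intro j hj; interval_cases j <;> simpa
      · intro j hj
        interval_cases j
        · simpa using hdist_a_sw i a b hi
        · simpa using hdist_sw_b i a b hd hi
    have hpl : pl S a b = 2 := pl_eq_two S a b i hd hi haS ha'S hbS
    have : gperm k i a b = hbin k S {i} a b := by
      simp [gperm, hbin, hpl]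
    rw [this]
    exact Ideal.mem_sup_right (Ideal.subset_span ⟨a, b, i, hconn, hit, hi, rfl⟩)
  · -- one of a, b not in S; then one of a', b' not in S as well
    have h1 : X a * X b ∈ VarIdeal k S := by
      rcases not_and_or.mp hab with h | h
      · exact Ideal.mul_mem_right _ _ (Ideal.subset_span ⟨a, h, rfl⟩)
      · exact Ideal.mul_mem_left _ _ (Ideal.subset_span ⟨b, h, rfl⟩)
    have h2' : X a' * X b' ∈ VarIdeal k S := by
      by_cases hab' : a' ∈ S ∧ b' ∈ S
      · exfalso
        have hd' : hdist a' b' = 2 := by rw [ha', hb', hdist_sw_sw, hd]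
        have := hS a' hab'.1 b' hab'.2 hd' i hit
        rw [ha', hb', sw_sw_left, sw_sw_left] at this
        exact hab ⟨this.1, this.2⟩
      · rcases not_and_or.mp hab' with h | h
        · exact Ideal.mul_mem_right _ _ (Ideal.subset_span ⟨a', h, rfl⟩)
        · exact Ideal.mul_mem_left _ _ (Ideal.subset_span ⟨b', h, rfl⟩)
    exact Ideal.mem_sup_left (Ideal.add_mem _ h1 h2')
end

section
/- Let S be a t-switchable set, and let a, b ∈ S be connected with d(a,b) ≥ 2 and a_i ≠ b_i for some i ∈ [t]. Suppose there exist paths in S from a to b whose lengths have different parities. Then the ideal Σ_{j≠i} (G_{{i,j},{i}}) contains a monomial all of whose variable subscripts are elements of S. -/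
open MvPolynomial Finset

variable {n : ℕ} {r : Fin n → ℕ}

variable (k : Type*) [Field k]

lemma sw_apply_self (i : Fin n) (a b : Idx r) : sw {i} a b i = b i := by
  simp [sw]

lemma sw_apply_ne {i l : Fin n} (hl : l ≠ i) (a b : Idx r) : sw {i} a b l = a l := by
  simp [sw, hl]

lemma hdist_one {e f : Idx r} (h : hdist e f = 1) :
    ∃ l, e l ≠ f l ∧ ∀ l', l' ≠ l → e l' = f l' := by
  unfold hdist at h
  rw [Finset.card_eq_one] at h
  obtain ⟨l, hl⟩ := h
  refine ⟨l, ?_, ?_⟩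
  · have hm : l ∈ Finset.univ.filter fun u => e u ≠ f u := by
      rw [hl]; exact Finset.mem_singleton_self l
    simpa using hm
  · intro l' hl'
    by_contra hne
    have hm : l' ∈ Finset.univ.filter fun u => e u ≠ f u :=
      Finset.mem_filter.mpr ⟨Finset.mem_univ _, hne⟩
    rw [hl] at hm
    exact hl' (Finset.mem_singleton.mp hm)

lemma hdist_one_intro {e f : Idx r} {l : Fin n} (h1 : e l ≠ f l)
    (h2 : ∀ l', l' ≠ l → e l' = f l') : hdist e f = 1 := by
  have hfil : (Finset.univ.filter fun u => e u ≠ f u) = ({l} : Finset (Fin n)) := by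
    ext u
    simp only [Finset.mem_filter, Finset.mem_univ, true_and, Finset.mem_singleton]
    constructor
    · intro hu; by_contra hc; exact hu (h2 u hc)
    · rintro rfl; exact h1
  unfold hdist
  rw [hfil, Finset.card_singleton]

lemma hdist_two {e f : Idx r} {i l : Fin n} (hil : i ≠ l)
    (h1 : e i ≠ f i) (h2 : e l ≠ f l) (h3 : ∀ l', l' ≠ i → l' ≠ l → e l' = f l') :
    hdist e f = 2 := by
  have hfil : (Finset.univ.filter fun u => e u ≠ f u) = ({i, l} : Finset (Fin n)) := by
    ext u
    simp only [Finset.mem_filter, Finset.mem_univ, true_and, Finset.mem_insert,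
      Finset.mem_singleton]
    constructor
    · intro hu
      by_contra hc
      push_neg at hc
      exact hu (h3 u hc.1 hc.2)
    · rintro (rfl | rfl)
      · exact h1
      · exact h2
  unfold hdist
  rw [hfil, Finset.card_insert_of_notMem (by simpa using hil), Finset.card_singleton]

lemma gen_mem {i : Fin n} {I : Ideal (MvPolynomial (Idx r) k)}
    (hI : ∀ (c d : Idx r) (j : Fin n), j ≠ i →
      (univ.filter fun u => c u ≠ d u) = ({i, j} : Finset (Fin n)) → gperm k i c d ∈ I)
    (c d : Idx r) (j : Fin n) (hj : j ≠ i) (hci : c i ≠ d i) (hcj : c j ≠ d j)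
    (hother : ∀ l, l ≠ i → l ≠ j → c l = d l) :
    (X c * X d + X (sw {i} c d) * X (sw {i} d c) : MvPolynomial (Idx r) k) ∈ I := by
  have hfil : (univ.filter fun u => c u ≠ d u) = ({i, j} : Finset (Fin n)) := by
    ext u
    simp only [Finset.mem_filter, Finset.mem_univ, true_and, Finset.mem_insert,
      Finset.mem_singleton]
    constructor
    · intro hu
      by_contra hc
      push_neg at hc
      exact hu (hother u hc.1 hc.2)
    · rintro (rfl | rfl)
      · exact hci
      · exact hcj
  have h := hI c d j hj hfil
  unfold gperm at h
  exact h

lemma transport_s11 {i : Fin n} {I : Ideal (MvPolynomial (Idx r) k)}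
    (hI : ∀ (c d : Idx r) (j : Fin n), j ≠ i →
      (univ.filter fun u => c u ≠ d u) = ({i, j} : Finset (Fin n)) → gperm k i c d ∈ I) :
    ∀ (h : ℕ), 1 ≤ h → ∀ (q : ℕ → Idx r) (z : Idx r), z i ≠ q 0 i →
      (∀ j < h, q j i = q (j + 1) i ∧ hdist (q j) (q (j + 1)) = 1) →
      ((Finset.Ico 1 h).prod fun j => (X (q j) : MvPolynomial (Idx r) k)) *
        (X (sw {i} (q 0) z) * X (q h) -
          (-1) ^ h * (X (q 0) * X (sw {i} (q h) z))) ∈ I := by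
  intro h h1
  induction h, h1 using Nat.le_induction with
  | base =>
    intro q z hz hq
    obtain ⟨hlab, hstep⟩ := hq 0 (by omega)
    obtain ⟨l0, hl0ne, hl0eq⟩ := hdist_one hstep
    have hl0i : l0 ≠ i := by
      intro hcon; subst hcon; exact hl0ne hlab
    have hg := gen_mem k hI (sw {i} (q 0) z) (q 1) l0 hl0i
      (by rw [sw_apply_self, ← hlab]; exact hz)
      (by rw [sw_apply_ne hl0i]; exact hl0ne)
      (fun l hli hlj => by rw [sw_apply_ne hli]; exact hl0eq l hlj)
    have E1 : sw {i} (sw {i} (q 0) z) (q 1) = q 0 := by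
      funext l
      by_cases hl : l = i
      · subst hl; rw [sw_apply_self]; exact hlab.symm
      · rw [sw_apply_ne hl, sw_apply_ne hl]
    have E2 : sw {i} (q 1) (sw {i} (q 0) z) = sw {i} (q 1) z := by
      funext l
      by_cases hl : l = i
      · subst hl; rw [sw_apply_self, sw_apply_self, sw_apply_self]
      · rw [sw_apply_ne hl, sw_apply_ne hl]
    rw [E1, E2] at hg
    have key : ((Finset.Ico 1 1).prod fun j => (X (q j) : MvPolynomial (Idx r) k)) *
        (X (sw {i} (q 0) z) * X (q 1) - (-1) ^ 1 * (X (q 0) * X (sw {i} (q 1) z))) =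
        X (sw {i} (q 0) z) * X (q 1) + X (q 0) * X (sw {i} (q 1) z) := by
      rw [Finset.Ico_self, Finset.prod_empty]; ring
    rw [key]
    exact hg
  | succ h h1 ih =>
    intro q z hz hq
    have hq' : ∀ j < h, q j i = q (j + 1) i ∧ hdist (q j) (q (j + 1)) = 1 :=
      fun j hj => hq j (by omega)
    have hprev := ih q z hz hq'
    have hconst : ∀ j, j ≤ h → q j i = q 0 i := by
      intro j
      induction j with
      | zero => intro _; rfl
      | succ j ihj =>
        intro hj
        rw [← (hq j (by omega)).1]
        exact ihj (by omega)
    obtain ⟨hlab, hstep⟩ := hq h (by omega)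
    obtain ⟨l0, hl0ne, hl0eq⟩ := hdist_one hstep
    have hl0i : l0 ≠ i := by
      intro hcon; subst hcon; exact hl0ne hlab
    have hzi : z i ≠ q h i := by rw [hconst h le_rfl]; exact hz
    have hg := gen_mem k hI (sw {i} (q h) z) (q (h + 1)) l0 hl0i
      (by rw [sw_apply_self, ← hlab]; exact hzi)
      (by rw [sw_apply_ne hl0i]; exact hl0ne)
      (fun l hli hlj => by rw [sw_apply_ne hli]; exact hl0eq l hlj)
    have E1 : sw {i} (sw {i} (q h) z) (q (h + 1)) = q h := by
      funext l
      by_cases hl : l = i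
      · subst hl; rw [sw_apply_self]; exact hlab.symm
      · rw [sw_apply_ne hl, sw_apply_ne hl]
    have E2 : sw {i} (q (h + 1)) (sw {i} (q h) z) = sw {i} (q (h + 1)) z := by
      funext l
      by_cases hl : l = i
      · subst hl; rw [sw_apply_self, sw_apply_self, sw_apply_self]
      · rw [sw_apply_ne hl, sw_apply_ne hl]
    rw [E1, E2] at hg
    rw [Finset.prod_Ico_succ_top h1]
    have key : (((Finset.Ico 1 h).prod fun j => (X (q j) : MvPolynomial (Idx r) k)) * X (q h)) *
        (X (sw {i} (q 0) z) * X (q (h + 1)) -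
          (-1) ^ (h + 1) * (X (q 0) * X (sw {i} (q (h + 1)) z))) =
        (((Finset.Ico 1 h).prod fun j => (X (q j) : MvPolynomial (Idx r) k)) *
          (X (sw {i} (q 0) z) * X (q h) - (-1) ^ h * (X (q 0) * X (sw {i} (q h) z)))) *
            X (q (h + 1))
        + ((-1) ^ h * (((Finset.Ico 1 h).prod fun j => (X (q j) : MvPolynomial (Idx r) k)) *
            X (q 0))) *
          (X (sw {i} (q h) z) * X (q (h + 1)) + X (q h) * X (sw {i} (q (h + 1)) z)) := by
      ring
    rw [key]
    exact I.add_mem (I.mul_mem_right _ hprev) (I.mul_mem_left _ hg)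

lemma normalizePath {t : ℕ} {S : Set (Idx r)} (hS : Switchable t S) {i : Fin n}
    (hi : (i : ℕ) < t) :
    ∀ (m : ℕ) (p : ℕ → Idx r) (a b : Idx r), IsPath S a b m p →
    ∃ (kk hh : ℕ) (d e : ℕ → Idx r), m = kk + hh ∧
      d 0 = a ∧ d kk = sw {i} a b ∧
      (∀ j ≤ kk, d j ∈ S) ∧ (∀ j ≤ kk, ∀ l, l ≠ i → d j l = a l) ∧
      (∀ j < kk, d j i ≠ d (j + 1) i) ∧
      e 0 = sw {i} a b ∧ e hh = b ∧ (∀ j ≤ hh, e j ∈ S) ∧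
      (∀ j < hh, e j i = e (j + 1) i ∧ hdist (e j) (e (j + 1)) = 1) := by
  intro m
  induction m with
  | zero =>
    intro p a b hp
    obtain ⟨hp0, hpm, hpS, _⟩ := hp
    have hab : a = b := by rw [← hp0, hpm]
    subst hab
    have haS : a ∈ S := by have := hpS 0 le_rfl; rwa [hp0] at this
    have hswa : sw {i} a a = a := by
      funext l
      by_cases hl : l = i
      · subst hl; rw [sw_apply_self]
      · rw [sw_apply_ne hl]
    exact ⟨0, 0, fun _ => a, fun _ => a, rfl, rfl, hswa.symm,
      fun j _ => haS, fun j _ l _ => rfl, fun j hj => absurd hj (Nat.not_lt_zero j),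
      hswa.symm, rfl, fun j _ => haS, fun j hj => absurd hj (Nat.not_lt_zero j)⟩
  | succ m ih =>
    intro p a b hp
    obtain ⟨hp0, hpm, hpS, hpstep⟩ := hp
    have haS : a ∈ S := by have := hpS 0 (by omega); rwa [hp0] at this
    have htail : IsPath S (p 1) b m (fun j => p (j + 1)) :=
      ⟨rfl, hpm, fun j hj => hpS (j + 1) (by omega), fun j hj => hpstep (j + 1) (by omega)⟩
    obtain ⟨kk, hh, d, e, hmkh, hd0, hdk, hdS, hdrest, hdlab, he0, heh, heS, hestep⟩ :=
      ih (fun j => p (j + 1)) (p 1) b htail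
    have hstep0 : hdist a (p 1) = 1 := by
      have := hpstep 0 (by omega); rwa [hp0] at this
    obtain ⟨l0, hl0ne, hl0eq⟩ := hdist_one hstep0
    by_cases hl0i : l0 = i
    · -- vertical first step
      have hai : a i ≠ p 1 i := by rw [← hl0i]; exact hl0ne
      have hrest : ∀ l, l ≠ i → a l = p 1 l := by
        intro l hl
        exact hl0eq l (by rw [hl0i]; exact hl)
      have hswc : sw {i} (p 1) b = sw {i} a b := by
        funext l
        by_cases hl : l = i
        · subst hl; rw [sw_apply_self, sw_apply_self]
        · rw [sw_apply_ne hl, sw_apply_ne hl, ← hrest l hl]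
      refine ⟨kk + 1, hh, fun j => Nat.casesOn j a fun j' => d j', e, by omega,
        rfl, ?_, ?_, ?_, ?_, he0.trans hswc, heh, heS, hestep⟩
      · show d kk = sw {i} a b
        rw [hdk, hswc]
      · intro j hj
        cases j with
        | zero => exact haS
        | succ j' => exact hdS j' (by omega)
      · intro j hj l hl
        cases j with
        | zero => rfl
        | succ j' =>
          show d j' l = a l
          rw [hdrest j' (by omega) l hl, ← hrest l hl]
      · intro j hj
        cases j with
        | zero =>
          show a i ≠ d 0 i
          rw [hd0]; exact hai
        | succ j' =>
          show d j' i ≠ d (j' + 1) i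
          exact hdlab j' (by omega)
    · -- horizontal first step
      have hai : a i = p 1 i := hl0eq i fun hcc => hl0i hcc.symm
      have hdn0 : (fun l => sw {i} a (d 0) l) = a := by
        funext l
        by_cases hl : l = i
        · subst hl; rw [sw_apply_self, hd0, ← hai]
        · rw [sw_apply_ne hl]
      have hdnrest : ∀ j, ∀ l, l ≠ i → sw {i} a (d j) l = a l :=
        fun j l hl => sw_apply_ne hl _ _
      have hdnlab : ∀ j, sw {i} a (d j) i = d j i := fun j => sw_apply_self i a (d j)
      have hdnS : ∀ j ≤ kk, sw {i} a (d j) ∈ S := by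
        intro j
        induction j with
        | zero =>
          intro _
          have : sw {i} a (d 0) = a := by funext l; exact congrFun hdn0 l
          rw [this]; exact haS
        | succ j ihj =>
          intro hj
          have h1 : sw {i} a (d j) ∈ S := ihj (by omega)
          have h2 : d (j + 1) ∈ S := hdS (j + 1) hj
          have hdd : hdist (sw {i} a (d j)) (d (j + 1)) = 2 := by
            refine hdist_two (i := i) (l := l0) (fun hcc => hl0i hcc.symm) ?_ ?_ ?_
            · rw [hdnlab j]
              exact hdlab j (by omega)
            · rw [hdnrest j l0 hl0i, hdrest (j + 1) hj l0 hl0i]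
              exact hl0ne
            · intro l hli hll0
              rw [hdnrest j l hli, hdrest (j + 1) hj l hli]
              exact hl0eq l hll0
          have hsw := (hS _ h1 _ h2 hdd i hi).1
          have heq : sw {i} (sw {i} a (d j)) (d (j + 1)) = sw {i} a (d (j + 1)) := by
            funext l
            by_cases hl : l = i
            · subst hl; rw [sw_apply_self, sw_apply_self]
            · rw [sw_apply_ne hl, sw_apply_ne hl, sw_apply_ne hl]
          rwa [heq] at hsw
      have hstep0' : hdist (sw {i} a b) (e 0) = 1 := by
        rw [he0]
        refine hdist_one_intro (l := l0) ?_ ?_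
        · rw [sw_apply_ne hl0i, sw_apply_ne hl0i]
          exact hl0ne
        · intro l hl
          by_cases hli : l = i
          · subst hli; rw [sw_apply_self, sw_apply_self]
          · rw [sw_apply_ne hli, sw_apply_ne hli]
            exact hl0eq l hl
      refine ⟨kk, hh + 1, fun j => sw {i} a (d j),
        fun j => Nat.casesOn j (sw {i} a b) fun j' => e j', by omega,
        hdn0, ?_, hdnS, fun j hj l hl => hdnrest j l hl,
        fun j hj => by
          show sw {i} a (d j) i ≠ sw {i} a (d (j + 1)) i
          rw [hdnlab j, hdnlab (j + 1)]; exact hdlab j hj,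
        rfl, heh, ?_, ?_⟩
      · -- sw {i} a (d kk) = sw {i} a b
        show sw {i} a (d kk) = sw {i} a b
        funext l
        by_cases hl : l = i
        · subst hl; rw [sw_apply_self, sw_apply_self, hdk, sw_apply_self]
        · rw [sw_apply_ne hl, sw_apply_ne hl]
      · intro j hj
        cases j with
        | zero =>
          show sw {i} a b ∈ S
          have heqk : sw {i} a (d kk) = sw {i} a b := by
            funext l
            by_cases hl : l = i
            · subst hl; rw [sw_apply_self, sw_apply_self, hdk, sw_apply_self]
            · rw [sw_apply_ne hl, sw_apply_ne hl]
          rw [← heqk]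
          exact hdnS kk le_rfl
        | succ j' => exact heS j' (by omega)
      · intro j hj
        cases j with
        | zero =>
          constructor
          · show (sw {i} a b) i = e 0 i
            rw [sw_apply_self, he0, sw_apply_self]
          · exact hstep0'
        | succ j' => exact hestep j' (by omega)

/-- if there are paths of different parity between `a` and `b`, the
ideal generated by the relevant slice permanents contains a monomial with all
subscripts in `S`. -/
theorem stmt11 (h2 : (2 : k) ≠ 0) (t : ℕ) (S : Set (Idx r)) (hS : Switchable t S)
    (a b : Idx r) (hab : Connected S a b) (hd : 2 ≤ hdist a b)
    (i : Fin n) (hi : (i : ℕ) < t) (hne : a i ≠ b i)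
    (m m' : ℕ) (p p' : ℕ → Idx r) (hp : IsPath S a b m p) (hp' : IsPath S a b m' p')
    (hpar : m % 2 ≠ m' % 2) :
    ∃ M : Multiset (Idx r), M ≠ 0 ∧ (∀ c ∈ M, c ∈ S) ∧
      (M.map fun c => (X c : MvPolynomial (Idx r) k)).prod ∈
        Ideal.span {q : MvPolynomial (Idx r) k | ∃ (c d : Idx r) (j : Fin n), j ≠ i ∧
          (univ.filter fun u => c u ≠ d u) = ({i, j} : Finset (Fin n)) ∧
          q = gperm k i c d} := by
  classical
  have hI : ∀ (c d : Idx r) (j : Fin n), j ≠ i →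
      (univ.filter fun u => c u ≠ d u) = ({i, j} : Finset (Fin n)) →
      gperm k i c d ∈ Ideal.span {q : MvPolynomial (Idx r) k |
        ∃ (c d : Idx r) (j : Fin n), j ≠ i ∧
          (univ.filter fun u => c u ≠ d u) = ({i, j} : Finset (Fin n)) ∧
          q = gperm k i c d} :=
    fun c d j hj hf => Ideal.subset_span ⟨c, d, j, hj, hf, rfl⟩
  set J := Ideal.span {q : MvPolynomial (Idx r) k | ∃ (c d : Idx r) (j : Fin n), j ≠ i ∧
      (univ.filter fun u => c u ≠ d u) = ({i, j} : Finset (Fin n)) ∧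
      q = gperm k i c d} with hJdef
  obtain ⟨K1, H1, d1, e1, hm1, hd10, hd1k, hd1S, hd1rest, hd1lab, he10, he1h, he1S, he1step⟩ :=
    normalizePath hS hi m p a b hp
  obtain ⟨K2, H2, d2, e2, hm2, hd20, hd2k, hd2S, hd2rest, hd2lab, he20, he2h, he2S, he2step⟩ :=
    normalizePath hS hi m' p' a b hp'
  have haS : a ∈ S := by have := hp.2.2.1 0 (by omega); rwa [hp.1] at this
  have hbS : b ∈ S := by have := hp.2.2.1 m le_rfl; rwa [hp.2.1] at this
  have hli : ∃ l, l ≠ i ∧ a l ≠ b l := by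
    by_contra hc
    push_neg at hc
    have hsub : (univ.filter fun l => a l ≠ b l) ⊆ {i} := by
      intro l hl
      rw [Finset.mem_filter] at hl
      rw [Finset.mem_singleton]
      by_contra hne'
      exact hl.2 (hc l hne')
    have hcard := Finset.card_le_card hsub
    rw [Finset.card_singleton] at hcard
    have hd' : 2 ≤ (univ.filter fun l => a l ≠ b l).card := hd
    omega
  obtain ⟨lb, hlbi, hlbab⟩ := hli
  have hHpos : ∀ (H : ℕ) (e : ℕ → Idx r), e 0 = sw {i} a b → e H = b → 1 ≤ H := by
    intro H e heA heB
    by_contra hcon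
    have hH0 : H = 0 := by omega
    subst hH0
    rw [heA] at heB
    have := congrFun heB lb
    rw [sw_apply_ne hlbi] at this
    exact hlbab this
  have hH1pos := hHpos H1 e1 he10 he1h
  have hH2pos := hHpos H2 e2 he20 he2h
  have hz1 : a i ≠ e1 0 i := by rw [he10, sw_apply_self]; exact hne
  have hz2 : a i ≠ e2 0 i := by rw [he20, sw_apply_self]; exact hne
  have T1 := transport_s11 k hI H1 hH1pos e1 a hz1 he1step
  have T2 := transport_s11 k hI H2 hH2pos e2 a hz2 he2step
  have hE1 : sw {i} (e1 0) a = a := by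
    funext l
    by_cases hl : l = i
    · subst hl; rw [sw_apply_self]
    · rw [sw_apply_ne hl, he10, sw_apply_ne hl]
  have hE2 : sw {i} (e2 0) a = a := by
    funext l
    by_cases hl : l = i
    · subst hl; rw [sw_apply_self]
    · rw [sw_apply_ne hl, he20, sw_apply_ne hl]
  rw [hE1, he1h, he10] at T1
  rw [hE2, he2h, he20] at T2
  by_cases hpar2 : H1 % 2 = H2 % 2
  · -- gadget case: vertical parities differ
    have hK12 : K1 % 2 ≠ K2 % 2 := by omega
    have hgadget : ∃ g : Idx r, g ∈ S ∧ (∀ l, l ≠ i → g l = a l) ∧ g i ≠ a i ∧ g i ≠ b i := by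
      by_contra hcon
      push_neg at hcon
      have hall : ∀ (K : ℕ) (d : ℕ → Idx r), d 0 = a → d K = sw {i} a b →
          (∀ j ≤ K, d j ∈ S) → (∀ j ≤ K, ∀ l, l ≠ i → d j l = a l) →
          (∀ j < K, d j i ≠ d (j + 1) i) → K % 2 = 1 := by
        intro K d hA hB hmem hrest hlab
        have hval : ∀ j ≤ K, d j i = a i ∨ d j i = b i := by
          intro j hj
          rcases eq_or_ne (d j i) (a i) with hc1 | hc1
          · exact Or.inl hc1
          · exact Or.inr (hcon (d j) (hmem j hj) (fun l hl => hrest j hj l hl) hc1)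
        have hstepval : ∀ j ≤ K, d j i = (if j % 2 = 0 then a i else b i) := by
          intro j
          induction j with
          | zero => intro _; simp [hA]
          | succ j ihj =>
            intro hj
            have hprev := ihj (by omega)
            have hnej := hlab j (by omega)
            rcases hval (j + 1) hj with hA' | hB'
            · rw [hA']
              rw [hprev, hA'] at hnej
              by_cases hjp : j % 2 = 0
              · rw [if_pos hjp] at hnej; exact absurd rfl hnej
              · rw [if_pos (by omega)]
            · rw [hB']
              rw [hprev, hB'] at hnej
              by_cases hjp : j % 2 = 0
              · rw [if_neg (by omega)]
              · rw [if_neg hjp] at hnej; exact absurd rfl hnej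
        have hKB : d K i = b i := by rw [hB, sw_apply_self]
        have hfin := hstepval K le_rfl
        rw [hKB] at hfin
        by_cases hKp : K % 2 = 0
        · rw [if_pos hKp] at hfin; exact absurd hfin.symm hne
        · omega
      have hK1o := hall K1 d1 hd10 hd1k hd1S hd1rest hd1lab
      have hK2o := hall K2 d2 hd20 hd2k hd2S hd2rest hd2lab
      omega
    obtain ⟨g, hgS, hgrest, hgA, hgB⟩ := hgadget
    obtain ⟨hlabE, hstepE⟩ := he1step 0 hH1pos
    obtain ⟨l1, hl1ne, hl1eq⟩ := hdist_one hstepE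
    have hl1i : l1 ≠ i := by
      intro hcc; subst hcc; exact hl1ne hlabE
    have hES : e1 1 ∈ S := he1S 1 hH1pos
    have hEi : e1 1 i = b i := by rw [← hlabE, he10, sw_apply_self]
    have hEl1 : a l1 ≠ e1 1 l1 := by
      have h01 : e1 0 l1 ≠ e1 1 l1 := hl1ne
      rw [he10, sw_apply_ne hl1i] at h01
      exact h01
    have hErest : ∀ l, l ≠ i → l ≠ l1 → a l = e1 1 l := by
      intro l hli' hll1
      have h01 := hl1eq l hll1
      rw [he10, sw_apply_ne hli'] at h01
      exact h01
    have hg1 := gen_mem k hI a (e1 1) l1 hl1i (by rw [hEi]; exact hne) hEl1 hErest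
    have hg2 := gen_mem k hI g (sw {i} (e1 1) a) l1 hl1i
      (by rw [sw_apply_self]; exact hgA)
      (by rw [sw_apply_ne hl1i, hgrest l1 hl1i]; exact hEl1)
      (by intro l hli' hll1; rw [sw_apply_ne hli', hgrest l hli']; exact hErest l hli' hll1)
    have hg3 := gen_mem k hI (sw {i} a (e1 1)) (sw {i} (e1 1) g) l1 hl1i
      (by rw [sw_apply_self, sw_apply_self, hEi]; exact fun hcc => hgB hcc.symm)
      (by rw [sw_apply_ne hl1i, sw_apply_ne hl1i]; exact hEl1)
      (by intro l hli' hll1; rw [sw_apply_ne hli', sw_apply_ne hli']; exact hErest l hli' hll1)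
    have R1 : sw {i} g (sw {i} (e1 1) a) = a := by
      funext l
      by_cases hl : l = i
      · subst hl; rw [sw_apply_self, sw_apply_self]
      · rw [sw_apply_ne hl, hgrest l hl]
    have R2 : sw {i} (sw {i} (e1 1) a) g = sw {i} (e1 1) g := by
      funext l
      by_cases hl : l = i
      · subst hl; rw [sw_apply_self, sw_apply_self]
      · rw [sw_apply_ne hl, sw_apply_ne hl, sw_apply_ne hl]
    have R3 : sw {i} (sw {i} a (e1 1)) (sw {i} (e1 1) g) = g := by
      funext l
      by_cases hl : l = i
      · subst hl; rw [sw_apply_self, sw_apply_self]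
      · rw [sw_apply_ne hl, sw_apply_ne hl]
        exact (hgrest l hl).symm
    have R4 : sw {i} (sw {i} (e1 1) g) (sw {i} a (e1 1)) = e1 1 := by
      funext l
      by_cases hl : l = i
      · subst hl; rw [sw_apply_self, sw_apply_self]
      · rw [sw_apply_ne hl, sw_apply_ne hl]
    rw [R1, R2] at hg2
    rw [R3, R4] at hg3
    have htwo : (2 : MvPolynomial (Idx r) k) * (X a * X (e1 1) * X g) ∈ J := by
      have hcomb : (2 : MvPolynomial (Idx r) k) * (X a * X (e1 1) * X g) =
          X g * (X a * X (e1 1) + X (sw {i} a (e1 1)) * X (sw {i} (e1 1) a))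
          - X (sw {i} a (e1 1)) *
            (X g * X (sw {i} (e1 1) a) + X a * X (sw {i} (e1 1) g))
          + X a * (X (sw {i} a (e1 1)) * X (sw {i} (e1 1) g) + X g * X (e1 1)) := by
        ring
      rw [hcomb]
      exact J.add_mem (J.sub_mem (J.mul_mem_left _ hg1) (J.mul_mem_left _ hg2))
        (J.mul_mem_left _ hg3)
    refine ⟨{a, e1 1, g}, by simp, ?_, ?_⟩
    · intro c hc
      simp only [Multiset.insert_eq_cons, Multiset.mem_cons, Multiset.mem_singleton] at hc
      rcases hc with rfl | rfl | rfl
      · exact haS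
      · exact hES
      · exact hgS
    · have hprod : (({a, e1 1, g} : Multiset (Idx r)).map
          fun c => (X c : MvPolynomial (Idx r) k)).prod = X a * (X (e1 1) * X g) := by
        simp [Multiset.insert_eq_cons]
      rw [hprod]
      have h21 : (C (2⁻¹ : k) : MvPolynomial (Idx r) k) * 2 = 1 := by
        rw [show ((2 : MvPolynomial (Idx r) k)) = C (2 : k) from (map_ofNat C 2).symm,
          ← C_mul, inv_mul_cancel₀ h2, C_1]
      have hdiv : (X a * (X (e1 1) * X g) : MvPolynomial (Idx r) k)
          = C (2⁻¹ : k) * ((2 : MvPolynomial (Idx r) k) * (X a * X (e1 1) * X g)) := by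
        linear_combination (-(X a * X (e1 1) * X g) : MvPolynomial (Idx r) k) * h21
      rw [hdiv]
      exact J.mul_mem_left _ htwo
  · -- sign case: horizontal parities differ
    have hsum : ((-1 : MvPolynomial (Idx r) k)) ^ H1 + (-1) ^ H2 = 0 := by
      rcases Nat.even_or_odd H1 with he1' | ho1'
      · have ho2' : Odd H2 := by
          rw [Nat.even_iff] at he1'; rw [Nat.odd_iff]; omega
        rw [he1'.neg_one_pow, ho2'.neg_one_pow]; ring
      · have he2' : Even H2 := by
          rw [Nat.odd_iff] at ho1'; rw [Nat.even_iff]; omega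
        rw [ho1'.neg_one_pow, he2'.neg_one_pow]; ring
    set P1 := (Finset.Ico 1 H1).prod fun j => (X (e1 j) : MvPolynomial (Idx r) k) with hP1
    set P2 := (Finset.Ico 1 H2).prod fun j => (X (e2 j) : MvPolynomial (Idx r) k) with hP2
    have htwo : (2 : MvPolynomial (Idx r) k) * (X a * X b * (P1 * P2)) ∈ J := by
      have hcomb : (2 : MvPolynomial (Idx r) k) * (X a * X b * (P1 * P2)) =
          P2 * (P1 * (X a * X b - (-1) ^ H1 * (X (sw {i} a b) * X (sw {i} b a))))
          + P1 * (P2 * (X a * X b - (-1) ^ H2 * (X (sw {i} a b) * X (sw {i} b a)))) := by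
        linear_combination (P1 * P2 * (X (sw {i} a b) * X (sw {i} b a)) :
          MvPolynomial (Idx r) k) * hsum
      rw [hcomb]
      exact J.add_mem (J.mul_mem_left _ T1) (J.mul_mem_left _ T2)
    refine ⟨a ::ₘ b ::ₘ (((Finset.Ico 1 H1).val.map e1) + ((Finset.Ico 1 H2).val.map e2)),
      Multiset.cons_ne_zero, ?_, ?_⟩
    · intro c hc
      rcases Multiset.mem_cons.mp hc with rfl | hc
      · exact haS
      rcases Multiset.mem_cons.mp hc with rfl | hc
      · exact hbS
      rcases Multiset.mem_add.mp hc with hc | hc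
      · obtain ⟨j, hj, rfl⟩ := Multiset.mem_map.mp hc
        have hjIco : j ∈ Finset.Ico 1 H1 := hj
        rw [Finset.mem_Ico] at hjIco
        exact he1S j (by omega)
      · obtain ⟨j, hj, rfl⟩ := Multiset.mem_map.mp hc
        have hjIco : j ∈ Finset.Ico 1 H2 := hj
        rw [Finset.mem_Ico] at hjIco
        exact he2S j (by omega)
    · have hprod : ((a ::ₘ b ::ₘ (((Finset.Ico 1 H1).val.map e1) +
          ((Finset.Ico 1 H2).val.map e2))).map
          fun c => (X c : MvPolynomial (Idx r) k)).prod = X a * (X b * (P1 * P2)) := by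
        rw [Multiset.map_cons, Multiset.map_cons, Multiset.prod_cons, Multiset.prod_cons,
          Multiset.map_add, Multiset.prod_add, Multiset.map_map, Multiset.map_map]
        rfl
      rw [hprod]
      have h21 : (C (2⁻¹ : k) : MvPolynomial (Idx r) k) * 2 = 1 := by
        rw [show ((2 : MvPolynomial (Idx r) k)) = C (2 : k) from (map_ofNat C 2).symm,
          ← C_mul, inv_mul_cancel₀ h2, C_1]
      have hdiv : (X a * (X b * (P1 * P2)) : MvPolynomial (Idx r) k)
          = C (2⁻¹ : k) * ((2 : MvPolynomial (Idx r) k) * (X a * X b * (P1 * P2))) := by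
        linear_combination (-(X a * X b * (P1 * P2)) : MvPolynomial (Idx r) k) * h21
      rw [hdiv]
      exact J.mul_mem_left _ htwo
end
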